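/- For integers ℓ/2 ≤ p ≤ min(ℓ, m) with m/n ≤ 1/9 and ℓ ≤ n, one has 3^p·C(m,p)·C(n−m,ℓ−p) ≤ 3^ℓ·2^ℓ·(m/n)^{ℓ/2}·C(n,ℓ); in particular Σ_{p=⌈ℓ/2⌉}^{min(ℓ,m)} C(m,p)·3^ℓ·C(n−m,ℓ−p) ≤ (ℓ/2+1)·3^ℓ·2^ℓ·(1/3)^ℓ·C(n,ℓ) = (ℓ/2+1)·2^ℓ·C(n,ℓ). -/

import Mathlib

/-- descFactorial splits over addition of exponents. -/
lemma dF_add (n a b : ℕ) :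
    n.descFactorial (a + b) = n.descFactorial a * (n - a).descFactorial b := by
  induction b with
  | zero => simp
  | succ b ih =>
    rw [← Nat.add_assoc, Nat.descFactorial_succ, Nat.descFactorial_succ, ih,
      Nat.sub_sub]
    ring

lemma aux_pow_dF {m n : ℕ} (h : m ≤ n) : ∀ p : ℕ,
    n ^ p * m.descFactorial p ≤ m ^ p * n.descFactorial p := by
  intro p
  induction p with
  | zero => simp
  | succ p ih =>
    rw [Nat.descFactorial_succ, Nat.descFactorial_succ, pow_succ, pow_succ]
    have key : n * (m - p) ≤ m * (n - p) := by
      rcases le_or_gt m p with hc | hc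
      · simp [Nat.sub_eq_zero_of_le hc]
      · have h1 : m * p ≤ n * p := Nat.mul_le_mul_right _ h
        calc n * (m - p) = n * m - n * p := by rw [Nat.mul_sub]
          _ ≤ n * m - m * p := Nat.sub_le_sub_left h1 _
          _ = m * n - m * p := by rw [Nat.mul_comm n m]
          _ = m * (n - p) := by rw [Nat.mul_sub]
    calc n ^ p * n * ((m - p) * m.descFactorial p)
        = (n * (m - p)) * (n ^ p * m.descFactorial p) := by ring
      _ ≤ (m * (n - p)) * (m ^ p * n.descFactorial p) := Nat.mul_le_mul key ih
      _ = m ^ p * m * ((n - p) * n.descFactorial p) := by ring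

/-- ℓ! ≤ 2^ℓ · p! · (ℓ-p)! -/
lemma factorial_le_two_pow {p ℓ : ℕ} (h : p ≤ ℓ) :
    Nat.factorial ℓ ≤ 2 ^ ℓ * (Nat.factorial p * Nat.factorial (ℓ - p)) := by
  have hc : ℓ.choose p ≤ 2 ^ ℓ := by
    calc ℓ.choose p ≤ ∑ k ∈ Finset.range (ℓ + 1), ℓ.choose k :=
          Finset.single_le_sum (fun k _ => Nat.zero_le _)
            (Finset.mem_range.mpr (Nat.lt_succ_of_le h))
      _ = 2 ^ ℓ := Nat.sum_range_choose ℓ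
  calc Nat.factorial ℓ = ℓ.choose p * Nat.factorial p * Nat.factorial (ℓ - p) :=
        (Nat.choose_mul_factorial_mul_factorial h).symm
    _ ≤ 2 ^ ℓ * Nat.factorial p * Nat.factorial (ℓ - p) :=
        Nat.mul_le_mul_right _ (Nat.mul_le_mul_right _ hc)
    _ = 2 ^ ℓ * (Nat.factorial p * Nat.factorial (ℓ - p)) := by ring

/-- Core natural-number inequality. -/
lemma natA {n m ℓ p : ℕ} (hmn : m ≤ n) (hpℓ : p ≤ ℓ) (hpm : p ≤ m) (hℓn : ℓ ≤ n) :
    n ^ p * (m.choose p * (n - m).choose (ℓ - p)) ≤ 2 ^ ℓ * (m ^ p * n.choose ℓ) := by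
  have K : 0 < Nat.factorial p * Nat.factorial (ℓ - p) :=
    Nat.mul_pos (Nat.factorial_pos _) (Nat.factorial_pos _)
  apply Nat.le_of_mul_le_mul_right _ K
  have e1 : m.choose p * Nat.factorial p = m.descFactorial p := by
    rw [Nat.descFactorial_eq_factorial_mul_choose]; ring
  have e2 : (n - m).choose (ℓ - p) * Nat.factorial (ℓ - p)
      = (n - m).descFactorial (ℓ - p) := by
    rw [Nat.descFactorial_eq_factorial_mul_choose]; ring
  calc n ^ p * (m.choose p * (n - m).choose (ℓ - p))
        * (Nat.factorial p * Nat.factorial (ℓ - p))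
      = n ^ p * (m.choose p * Nat.factorial p)
        * ((n - m).choose (ℓ - p) * Nat.factorial (ℓ - p)) := by ring
    _ = n ^ p * m.descFactorial p * (n - m).descFactorial (ℓ - p) := by rw [e1, e2]
    _ ≤ m ^ p * n.descFactorial p * (n - p).descFactorial (ℓ - p) :=
        Nat.mul_le_mul (aux_pow_dF hmn p)
          (Nat.descFactorial_le _ (Nat.sub_le_sub_left hpm n))
    _ = m ^ p * n.descFactorial ℓ := by
        rw [mul_assoc, ← dF_add n p (ℓ - p), Nat.add_sub_cancel' hpℓ]
    _ = m ^ p * (n.choose ℓ * Nat.factorial ℓ) := by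
        rw [Nat.descFactorial_eq_factorial_mul_choose]; ring
    _ ≤ m ^ p * (n.choose ℓ * (2 ^ ℓ * (Nat.factorial p * Nat.factorial (ℓ - p)))) :=
        Nat.mul_le_mul_left _ (Nat.mul_le_mul_left _ (factorial_le_two_pow hpℓ))
    _ = 2 ^ ℓ * (m ^ p * n.choose ℓ) * (Nat.factorial p * Nat.factorial (ℓ - p)) := by
        ring

/-- Natural bound for the sum terms. -/
lemma natB {n m ℓ p : ℕ} (hm : 0 < m) (h9 : 9 * m ≤ n) (h2p : ℓ ≤ 2 * p)
    (hpℓ : p ≤ ℓ) (hpm : p ≤ m) (hℓn : ℓ ≤ n) :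
    3 ^ ℓ * (m.choose p * (n - m).choose (ℓ - p)) ≤ 2 ^ ℓ * n.choose ℓ := by
  have hmn : m ≤ n := by omega
  have hA := natA hmn hpℓ hpm hℓn
  have hmp : 0 < m ^ p := Nat.pow_pos hm
  apply Nat.le_of_mul_le_mul_right _ hmp
  have h3 : 3 ^ ℓ * m ^ p ≤ n ^ p := by
    calc 3 ^ ℓ * m ^ p ≤ 3 ^ (2 * p) * m ^ p :=
          Nat.mul_le_mul_right _ (Nat.pow_le_pow_right (by norm_num) h2p)
      _ = 9 ^ p * m ^ p := by rw [pow_mul]; norm_num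
      _ = (9 * m) ^ p := (mul_pow 9 m p).symm
      _ ≤ n ^ p := Nat.pow_le_pow_left h9 p
  calc 3 ^ ℓ * (m.choose p * (n - m).choose (ℓ - p)) * m ^ p
      = (3 ^ ℓ * m ^ p) * (m.choose p * (n - m).choose (ℓ - p)) := by ring
    _ ≤ n ^ p * (m.choose p * (n - m).choose (ℓ - p)) :=
        Nat.mul_le_mul_right _ h3
    _ ≤ 2 ^ ℓ * (m ^ p * n.choose ℓ) := hA
    _ = 2 ^ ℓ * n.choose ℓ * m ^ p := by ring

/-- For `ℓ/2 ≤ p ≤ min(ℓ,m)` with `m/n ≤ 1/9` and `ℓ ≤ n`, one has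
`3^p·C(m,p)·C(n−m,ℓ−p) ≤ 3^ℓ·2^ℓ·(m/n)^{ℓ/2}·C(n,ℓ)`; in particular
`Σ_{p=⌈ℓ/2⌉}^{min(ℓ,m)} C(m,p)·3^ℓ·C(n−m,ℓ−p) ≤ (ℓ/2+1)·2^ℓ·C(n,ℓ)`. -/
theorem stmt_17 (n m ℓ : ℕ) (hn : 0 < n) (hm : 9*m ≤ n) (hℓ : ℓ ≤ n) :
    (∀ p : ℕ, ℓ ≤ 2*p → p ≤ min ℓ m →
      (3:ℝ)^p * (m.choose p : ℝ) * ((n-m).choose (ℓ-p) : ℝ)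
        ≤ (3:ℝ)^ℓ * 2^ℓ * ((m:ℝ)/(n:ℝ))^((ℓ:ℝ)/2) * (n.choose ℓ : ℝ)) ∧
    ∑ p ∈ Finset.Icc ((ℓ+1)/2) (min ℓ m),
        (m.choose p : ℝ) * (3:ℝ)^ℓ * ((n-m).choose (ℓ-p) : ℝ)
      ≤ ((ℓ:ℝ)/2 + 1) * 2^ℓ * (n.choose ℓ : ℝ) := by
  have hnR : (0:ℝ) < n := by exact_mod_cast hn
  constructor
  · intro p h2p hple
    obtain ⟨hpℓ, hpm⟩ := le_min_iff.mp hple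
    rcases Nat.eq_zero_or_pos m with hm0 | hmpos
    · have hp0 : p = 0 := by omega
      have hℓ0 : ℓ = 0 := by omega
      subst hm0; subst hp0; subst hℓ0
      norm_num [Real.rpow_zero]
    · have hmn : m ≤ n := by omega
      have hA := natA hmn hpℓ hpm hℓ
      have hAc : ((n:ℝ))^p * ((m.choose p : ℝ) * ((n-m).choose (ℓ-p) : ℝ))
          ≤ 2^ℓ * ((m:ℝ)^p * (n.choose ℓ : ℝ)) := by
        exact_mod_cast hA
      have hAR : (m.choose p : ℝ) * ((n-m).choose (ℓ-p) : ℝ)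
          ≤ 2^ℓ * ((m:ℝ)/(n:ℝ))^p * (n.choose ℓ : ℝ) := by
        rw [div_pow]
        rw [show (2:ℝ)^ℓ * ((m:ℝ)^p/(n:ℝ)^p) * (n.choose ℓ : ℝ)
            = 2^ℓ * ((m:ℝ)^p * (n.choose ℓ : ℝ)) / (n:ℝ)^p by ring]
        rw [le_div_iff₀ (pow_pos hnR p)]
        calc (m.choose p : ℝ) * ((n-m).choose (ℓ-p) : ℝ) * (n:ℝ)^p
            = (n:ℝ)^p * ((m.choose p : ℝ) * ((n-m).choose (ℓ-p) : ℝ)) := by ring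
          _ ≤ 2^ℓ * ((m:ℝ)^p * (n.choose ℓ : ℝ)) := hAc
      have hx0 : (0:ℝ) < (m:ℝ)/(n:ℝ) := by
        apply div_pos _ hnR; exact_mod_cast hmpos
      have hx : (0:ℝ) < 3 * ((m:ℝ)/(n:ℝ)) := by linarith
      have hx1 : 3 * ((m:ℝ)/(n:ℝ)) ≤ 1 := by
        rw [← mul_div_assoc, div_le_one hnR]
        have : (3*m : ℕ) ≤ n := by omega
        exact_mod_cast this
      have hexp : (ℓ:ℝ)/2 ≤ (p:ℝ) := by
        have : (ℓ:ℝ) ≤ 2 * (p:ℝ) := by exact_mod_cast h2p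
        linarith
      have key : (3:ℝ)^p * ((m:ℝ)/(n:ℝ))^p
          ≤ (3:ℝ)^ℓ * ((m:ℝ)/(n:ℝ))^((ℓ:ℝ)/2) := by
        calc (3:ℝ)^p * ((m:ℝ)/(n:ℝ))^p = (3 * ((m:ℝ)/(n:ℝ)))^p := (mul_pow _ _ _).symm
          _ = (3 * ((m:ℝ)/(n:ℝ)))^((p:ℝ)) := (Real.rpow_natCast _ p).symm
          _ ≤ (3 * ((m:ℝ)/(n:ℝ)))^((ℓ:ℝ)/2) :=
              Real.rpow_le_rpow_of_exponent_ge hx hx1 hexp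
          _ = (3:ℝ)^((ℓ:ℝ)/2) * ((m:ℝ)/(n:ℝ))^((ℓ:ℝ)/2) :=
              Real.mul_rpow (by norm_num) (le_of_lt hx0)
          _ ≤ (3:ℝ)^((ℓ:ℝ)) * ((m:ℝ)/(n:ℝ))^((ℓ:ℝ)/2) := by
              apply mul_le_mul_of_nonneg_right
                (Real.rpow_le_rpow_of_exponent_le (by norm_num) (by linarith [Nat.cast_nonneg (α := ℝ) ℓ]))
                (Real.rpow_nonneg (le_of_lt hx0) _)
          _ = (3:ℝ)^ℓ * ((m:ℝ)/(n:ℝ))^((ℓ:ℝ)/2) := by rw [Real.rpow_natCast]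
      calc (3:ℝ)^p * (m.choose p : ℝ) * ((n-m).choose (ℓ-p) : ℝ)
          = (3:ℝ)^p * ((m.choose p : ℝ) * ((n-m).choose (ℓ-p) : ℝ)) := by ring
        _ ≤ (3:ℝ)^p * (2^ℓ * ((m:ℝ)/(n:ℝ))^p * (n.choose ℓ : ℝ)) :=
            mul_le_mul_of_nonneg_left hAR (by positivity)
        _ = (2^ℓ * (n.choose ℓ : ℝ)) * ((3:ℝ)^p * ((m:ℝ)/(n:ℝ))^p) := by ring
        _ ≤ (2^ℓ * (n.choose ℓ : ℝ)) * ((3:ℝ)^ℓ * ((m:ℝ)/(n:ℝ))^((ℓ:ℝ)/2)) :=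
            mul_le_mul_of_nonneg_left key (by positivity)
        _ = (3:ℝ)^ℓ * 2^ℓ * ((m:ℝ)/(n:ℝ))^((ℓ:ℝ)/2) * (n.choose ℓ : ℝ) := by ring
  · have hterm : ∀ p ∈ Finset.Icc ((ℓ+1)/2) (min ℓ m),
        (m.choose p : ℝ) * (3:ℝ)^ℓ * ((n-m).choose (ℓ-p) : ℝ)
          ≤ 2^ℓ * (n.choose ℓ : ℝ) := by
      intro p hp
      rw [Finset.mem_Icc] at hp
      obtain ⟨h1, h2⟩ := hp
      have hpℓ : p ≤ ℓ := le_trans h2 (min_le_left _ _)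
      have hpm : p ≤ m := le_trans h2 (min_le_right _ _)
      have h2p : ℓ ≤ 2*p := by omega
      rcases Nat.eq_zero_or_pos m with hm0 | hmpos
      · have hp0 : p = 0 := by omega
        have hℓ0 : ℓ = 0 := by omega
        subst hm0; subst hp0; subst hℓ0
        norm_num
      · have hB := natB hmpos hm h2p hpℓ hpm hℓ
        have hBc : (3:ℝ)^ℓ * ((m.choose p : ℝ) * ((n-m).choose (ℓ-p) : ℝ))
            ≤ 2^ℓ * (n.choose ℓ : ℝ) := by exact_mod_cast hB
        calc (m.choose p : ℝ) * (3:ℝ)^ℓ * ((n-m).choose (ℓ-p) : ℝ)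
            = (3:ℝ)^ℓ * ((m.choose p : ℝ) * ((n-m).choose (ℓ-p) : ℝ)) := by ring
          _ ≤ 2^ℓ * (n.choose ℓ : ℝ) := hBc
    calc ∑ p ∈ Finset.Icc ((ℓ+1)/2) (min ℓ m),
          (m.choose p : ℝ) * (3:ℝ)^ℓ * ((n-m).choose (ℓ-p) : ℝ)
        ≤ ∑ _p ∈ Finset.Icc ((ℓ+1)/2) (min ℓ m), (2:ℝ)^ℓ * (n.choose ℓ : ℝ) :=
          Finset.sum_le_sum hterm
      _ = ((Finset.Icc ((ℓ+1)/2) (min ℓ m)).card : ℝ) * ((2:ℝ)^ℓ * (n.choose ℓ : ℝ)) := by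
          rw [Finset.sum_const, nsmul_eq_mul]
      _ ≤ ((ℓ:ℝ)/2 + 1) * ((2:ℝ)^ℓ * (n.choose ℓ : ℝ)) := by
          apply mul_le_mul_of_nonneg_right _ (by positivity)
          rw [Nat.card_Icc]
          have h2c : 2 * (min ℓ m + 1 - (ℓ+1)/2) ≤ ℓ + 2 := by omega
          have h2cR : (2:ℝ) * ((min ℓ m + 1 - (ℓ+1)/2 : ℕ) : ℝ) ≤ (ℓ:ℝ) + 2 := by
            exact_mod_cast h2c
          linarith
      _ = ((ℓ:ℝ)/2 + 1) * 2^ℓ * (n.choose ℓ : ℝ) := by ring
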